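/- Let q ∈ ℝ² and let σ be a closed line segment in ℝ². The set {θ ∈ ℝ : the line {q + r • (cos θ, sin θ) : r ∈ ℝ} meets σ} is invariant under θ ↦ θ + π, and its image in the circle AddCircle π under the quotient map ℝ → AddCircle π is a connected subset of AddCircle π. -/

import Mathlib

open Set Complex

noncomputable section

def lineThrough2 (a v : ℝ × ℝ) : Set (ℝ × ℝ) :=
  {p | ∃ r : ℝ, p = a + r • v}

def IsLine2 (L : Set (ℝ × ℝ)) : Prop :=
  ∃ a v : ℝ × ℝ, v ≠ 0 ∧ L = lineThrough2 a v

/-- natural map from `Real.Angle = AddCircle (2π)` to `AddCircle π`. -/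
noncomputable def toCirc : Real.Angle →+ AddCircle Real.pi :=
  QuotientAddGroup.map _ _ (AddMonoidHom.id ℝ) (by
    intro z hz
    obtain ⟨n, rfl⟩ := AddSubgroup.mem_zmultiples_iff.mp hz
    exact AddSubgroup.mem_zmultiples_iff.mpr ⟨2 * n, by rw [mul_comm 2 n, mul_zsmul]; norm_num⟩)

lemma toCirc_coe (θ : ℝ) : toCirc ((θ : Real.Angle)) = (θ : AddCircle Real.pi) := rfl

lemma continuous_toCirc : Continuous toCirc := by
  exact (QuotientAddGroup.isQuotientMap_mk (AddSubgroup.zmultiples (2 * Real.pi))).continuous_iff.mpr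
    continuous_quotient_mk'

lemma lineThrough2_neg (a v : ℝ × ℝ) : lineThrough2 a (-v) = lineThrough2 a v := by
  ext p
  constructor <;> rintro ⟨r, rfl⟩ <;> exact ⟨-r, by simp⟩

/-- the difference vector, as a complex number. -/
def vec (q p : ℝ × ℝ) : ℂ := ((p.1 - q.1 : ℝ) : ℂ) + ((p.2 - q.2 : ℝ) : ℂ) * I

lemma vec_re (q p : ℝ × ℝ) : (vec q p).re = p.1 - q.1 := by simp [vec]
lemma vec_im (q p : ℝ × ℝ) : (vec q p).im = p.2 - q.2 := by simp [vec]

lemma vec_ne_zero {q p : ℝ × ℝ} (h : p ≠ q) : vec q p ≠ 0 := by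
  intro h0
  apply h
  have h1 := congrArg Complex.re h0
  have h2 := congrArg Complex.im h0
  rw [vec_re] at h1
  rw [vec_im] at h2
  simp only [Complex.zero_re, Complex.zero_im, sub_eq_zero] at h1 h2
  exact Prod.ext h1 h2

lemma continuous_vec (q : ℝ × ℝ) : Continuous (vec q) := by
  unfold vec
  exact (continuous_ofReal.comp (continuous_fst.sub continuous_const)).add
    ((continuous_ofReal.comp (continuous_snd.sub continuous_const)).mul continuous_const)

lemma cs_ne_zero (θ : ℝ) : ((Real.cos θ : ℂ) + (Real.sin θ : ℂ) * I) ≠ 0 := by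
  intro h
  rw [Complex.ext_iff] at h
  simp only [Complex.add_re, Complex.add_im, Complex.ofReal_re, Complex.ofReal_im,
    Complex.mul_re, Complex.mul_im, Complex.I_re, Complex.I_im, Complex.zero_re,
    Complex.zero_im] at h
  obtain ⟨h1, h2⟩ := h
  nlinarith [Real.sin_sq_add_cos_sq θ]

lemma arg_angle_coe (θ : ℝ) :
    ((arg ((Real.cos θ : ℂ) + (Real.sin θ : ℂ) * I) : ℝ) : Real.Angle) = (θ : Real.Angle) := by
  rw [← Real.Angle.cos_coe, ← Real.Angle.sin_coe, arg_cos_add_sin_mul_I_coe_angle]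

lemma key (θ : ℝ) {r : ℝ} (hr : r ≠ 0) :
    toCirc ((arg ((r : ℂ) * ((Real.cos θ : ℂ) + (Real.sin θ : ℂ) * I)) : ℝ) : Real.Angle)
      = (θ : AddCircle Real.pi) := by
  rcases hr.lt_or_gt with hneg | hpos
  · have h1 : (r : ℂ) * ((Real.cos θ : ℂ) + (Real.sin θ : ℂ) * I)
        = -(((-r : ℝ) : ℂ) * ((Real.cos θ : ℂ) + (Real.sin θ : ℂ) * I)) := by
      push_cast [Complex.ofReal_neg]; ring
    have hw : ((-r : ℝ) : ℂ) * ((Real.cos θ : ℂ) + (Real.sin θ : ℂ) * I) ≠ 0 :=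
      mul_ne_zero (by exact_mod_cast neg_ne_zero.mpr hr) (cs_ne_zero θ)
    have hpi : ((Real.pi : ℝ) : AddCircle Real.pi) = 0 := AddCircle.coe_period Real.pi
    rw [h1, arg_neg_coe_angle hw, arg_real_mul _ (by linarith : (0:ℝ) < -r), map_add,
      arg_angle_coe, toCirc_coe, toCirc_coe, hpi, add_zero]
  · rw [arg_real_mul _ hpos, arg_angle_coe, toCirc_coe]

theorem stmt_12 (q x y : ℝ × ℝ) :
    (∀ θ : ℝ, θ + Real.pi ∈
        {θ : ℝ | (lineThrough2 q (Real.cos θ, Real.sin θ) ∩ segment ℝ x y).Nonempty} ↔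
      θ ∈ {θ : ℝ | (lineThrough2 q (Real.cos θ, Real.sin θ) ∩ segment ℝ x y).Nonempty}) ∧
    IsConnected ((fun θ : ℝ => (θ : AddCircle Real.pi)) ''
      {θ : ℝ | (lineThrough2 q (Real.cos θ, Real.sin θ) ∩ segment ℝ x y).Nonempty}) := by
  constructor
  · intro θ
    simp only [mem_setOf_eq, Real.cos_add_pi, Real.sin_add_pi]
    have h : ((-Real.cos θ, -Real.sin θ) : ℝ × ℝ) = -(Real.cos θ, Real.sin θ) := rfl
    rw [h, lineThrough2_neg]
  · by_cases hq : q ∈ segment ℝ x y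
    · have hS : {θ : ℝ | (lineThrough2 q (Real.cos θ, Real.sin θ) ∩ segment ℝ x y).Nonempty}
          = univ := eq_univ_of_forall fun θ => ⟨q, ⟨0, by simp⟩, hq⟩
      rw [hS, image_univ]
      exact isConnected_range continuous_quotient_mk'
    · have hpne : ∀ p ∈ segment ℝ x y, p ≠ q := fun p hp h => hq (h ▸ hp)
      have hfc : ContinuousOn (fun p => toCirc ((arg (vec q p) : ℝ) : Real.Angle))
          (segment ℝ x y) := fun p hp =>
        (continuous_toCirc.continuousAt.comp
          ((continuousAt_arg_coe_angle (vec_ne_zero (hpne p hp))).comp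
            (continuous_vec q).continuousAt)).continuousWithinAt
      have himg : (fun θ : ℝ => (θ : AddCircle Real.pi)) ''
          {θ : ℝ | (lineThrough2 q (Real.cos θ, Real.sin θ) ∩ segment ℝ x y).Nonempty}
          = (fun p => toCirc ((arg (vec q p) : ℝ) : Real.Angle)) '' segment ℝ x y := by
        ext c
        constructor
        · rintro ⟨θ, ⟨p, ⟨r, rfl⟩, hpσ⟩, rfl⟩
          refine ⟨q + r • (Real.cos θ, Real.sin θ), hpσ, ?_⟩
          have hr : r ≠ 0 := by
            rintro rfl
            exact hpne _ hpσ (by simp)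
          have hzp : vec q (q + r • (Real.cos θ, Real.sin θ))
              = (r : ℂ) * ((Real.cos θ : ℂ) + (Real.sin θ : ℂ) * I) := by
            unfold vec
            simp only [Prod.fst_add, Prod.snd_add, Prod.smul_fst, Prod.smul_snd, smul_eq_mul,
              add_sub_cancel_left]
            push_cast
            ring
          show toCirc ((arg (vec q (q + r • (Real.cos θ, Real.sin θ))) : ℝ) : Real.Angle)
              = (θ : AddCircle Real.pi)
          rw [hzp, key θ hr]
        · rintro ⟨p, hp, rfl⟩
          have hz := vec_ne_zero (hpne p hp)
          have habs : ‖vec q p‖ ≠ 0 := by simpa using hz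
          refine ⟨arg (vec q p), ⟨p, ⟨‖vec q p‖, ?_⟩, hp⟩, (toCirc_coe _).symm⟩
          apply Prod.ext
          · simp only [Prod.fst_add, Prod.smul_fst, smul_eq_mul]
            rw [cos_arg hz, vec_re, mul_div_cancel₀ _ habs]
            ring
          · simp only [Prod.snd_add, Prod.smul_snd, smul_eq_mul]
            rw [sin_arg, vec_im, mul_div_cancel₀ _ habs]
            ring
      rw [himg]
      exact IsConnected.image ⟨⟨x, left_mem_segment ℝ x y⟩,
        (convex_segment x y).isPreconnected⟩ _ hfc
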